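/- Let f: [M⁻¹ → M⁰] → [N⁻¹ → N⁰] be a quasi-isomorphism of two-term complexes of finitely generated free abelian groups (i.e., f induces isomorphisms on the kernel and cokernel of the differentials). Then the dual map [(N⁰)^∨ → (N⁻¹)^∨] → [(M⁰)^∨ → (M⁻¹)^∨], where X^∨ = Hom_ℤ(X, ℤ), is also a quasi-isomorphism. -/

import Mathlib

/-- A morphism `(φ1, φ0) : [X1 → X0] → [Y1 → Y0]` of two-term complexes (in degrees
`-1, 0`) is a quasi-isomorphism: it is a morphism of complexes and induces isomorphisms
on the kernels and cokernels of the differentials. -/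
def IsTwoTermQuasiIso {X1 X0 Y1 Y0 : Type*} [AddCommGroup X1] [AddCommGroup X0]
    [AddCommGroup Y1] [AddCommGroup Y0]
    (dX : X1 →ₗ[ℤ] X0) (dY : Y1 →ₗ[ℤ] Y0) (φ1 : X1 →ₗ[ℤ] Y1) (φ0 : X0 →ₗ[ℤ] Y0) :
    Prop :=
  (∀ x, φ0 (dX x) = dY (φ1 x)) ∧
  -- injective on kernels
  (∀ x, dX x = 0 → φ1 x = 0 → x = 0) ∧
  -- surjective on kernels
  (∀ y, dY y = 0 → ∃ x, dX x = 0 ∧ φ1 x = y) ∧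
  -- injective on cokernels
  (∀ x0, (∃ y1, φ0 x0 = dY y1) → ∃ x1, x0 = dX x1) ∧
  -- surjective on cokernels
  (∀ y0, ∃ x0 y1, y0 = φ0 x0 + dY y1)

open LinearMap

set_option maxHeartbeats 2000000 in
/-- A quasi-isomorphism of two-term complexes with projective `N0` is a chain
homotopy equivalence. -/
lemma exists_htpy_inv {M1 M0 N1 N0 : Type*} [AddCommGroup M1] [AddCommGroup M0]
    [AddCommGroup N1] [AddCommGroup N0] [Module.Projective ℤ N0]
    (dM : M1 →ₗ[ℤ] M0) (dN : N1 →ₗ[ℤ] N0) (f1 : M1 →ₗ[ℤ] N1) (f0 : M0 →ₗ[ℤ] N0)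
    (h : IsTwoTermQuasiIso dM dN f1 f0) :
    ∃ (g1 : N1 →ₗ[ℤ] M1) (g0 : N0 →ₗ[ℤ] M0) (sM : M0 →ₗ[ℤ] M1) (sN : N0 →ₗ[ℤ] N1),
      (∀ n, g0 (dN n) = dM (g1 n)) ∧
      (∀ m, g0 (f0 m) - m = dM (sM m)) ∧
      (∀ m, g1 (f1 m) - m = sM (dM m)) ∧
      (∀ n, f0 (g0 n) - n = dN (sN n)) ∧
      (∀ n, f1 (g1 n) - n = sN (dN n)) := by
  obtain ⟨hc, hik, hsk, hic, hsc⟩ := h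
  -- the mapping cone:  M1 -a→ M0 × N1 -b→ N0
  set a : M1 →ₗ[ℤ] M0 × N1 := (-dM).prod f1 with ha_def
  set b : M0 × N1 →ₗ[ℤ] N0 := f0.coprod dN with hb_def
  have hab : ∀ m, b (a m) = 0 := by
    intro m
    simp only [ha_def, hb_def, prod_apply, coprod_apply, Function.prod, LinearMap.neg_apply]
    rw [map_neg, hc m]; abel
  have ha_inj : Function.Injective a := by
    rw [← ker_eq_bot, eq_bot_iff]
    intro m hm
    simp only [mem_ker, ha_def, prod_apply, Function.prod, LinearMap.neg_apply, Prod.mk_eq_zero,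
      neg_eq_zero] at hm
    exact hik m hm.1 hm.2
  have hb_surj : Function.Surjective b := by
    intro y0
    obtain ⟨x0, y1, hy⟩ := hsc y0
    exact ⟨(x0, y1), hy.symm⟩
  have hker : ∀ p, b p = 0 → ∃ m, a m = p := by
    rintro ⟨m0, n1⟩ hp
    simp only [hb_def, coprod_apply] at hp
    obtain ⟨x1, hx1⟩ := hic m0 ⟨-n1, by rw [map_neg]; exact eq_neg_of_add_eq_zero_left hp⟩
    have h2 : dN (f1 x1 + n1) = 0 := by
      rw [map_add, ← hc x1, ← hx1]; exact hp
    obtain ⟨m'', hm''1, hm''2⟩ := hsk _ h2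
    refine ⟨m'' - x1, ?_⟩
    simp only [ha_def, prod_apply, Function.prod, LinearMap.neg_apply, map_sub, hm''1, hm''2, hx1]
    rw [Prod.mk.injEq]
    constructor <;> abel
  -- split `b` using projectivity of `N0`
  obtain ⟨σ, hσ⟩ := Module.projective_lifting_property b LinearMap.id hb_surj
  have hσ' : ∀ n, b (σ n) = n := fun n => congrArg (fun g => g n) (congrArg DFunLike.coe hσ)
  -- `a` is an iso onto `ker b`
  let a' : M1 →ₗ[ℤ] ker b := a.codRestrict (ker b) (fun m => mem_ker.2 (hab m))
  have ha'_bij : Function.Bijective a' := by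
    constructor
    · intro x y hxy
      apply ha_inj
      exact congrArg Subtype.val hxy
    · rintro ⟨p, hp⟩
      obtain ⟨m, hm⟩ := hker p (mem_ker.1 hp)
      exact ⟨m, Subtype.ext hm⟩
  let e : M1 ≃ₗ[ℤ] ker b := LinearEquiv.ofBijective a' ha'_bij
  -- `id - σ ∘ b` lands in `ker b`
  let r : M0 × N1 →ₗ[ℤ] ker b :=
    (LinearMap.id - σ.comp b).codRestrict (ker b) (fun p => by
      simp only [mem_ker, LinearMap.sub_apply, id_apply, comp_apply, map_sub, hσ' (b p), sub_self])
  let τ : M0 × N1 →ₗ[ℤ] M1 := e.symm.toLinearMap.comp r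
  have haτ : ∀ p, a (τ p) = p - σ (b p) := by
    intro p
    exact congrArg Subtype.val (e.apply_symm_apply (r p))
  have hτa : ∀ m, τ (a m) = m := by
    intro m
    apply ha'_bij.1
    apply Subtype.ext
    show a (τ (a m)) = a m
    rw [haτ (a m), hab m, map_zero, sub_zero]
  refine ⟨τ.comp (inr ℤ M0 N1), (fst ℤ M0 N1).comp σ, τ.comp (inl ℤ M0 N1),
    -((snd ℤ M0 N1).comp σ), ?_, ?_, ?_, ?_, ?_⟩
  · -- g0 ∘ dN = dM ∘ g1
    intro n
    have h2 := congrArg Prod.fst (haτ (0, n))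
    simp only [ha_def, hb_def, prod_apply, Function.prod, LinearMap.neg_apply, coprod_apply, map_zero,
      zero_add, Prod.fst_sub, zero_sub] at h2
    simp only [comp_apply, fst_apply, inr_apply]
    rw [neg_inj] at h2
    exact h2.symm
  · -- g0 f0 - id = dM sM
    intro m
    have h2 := congrArg Prod.fst (haτ (m, 0))
    simp only [ha_def, hb_def, prod_apply, Function.prod, LinearMap.neg_apply, coprod_apply, map_zero,
      add_zero, Prod.fst_sub] at h2
    simp only [comp_apply, fst_apply, inl_apply]
    rw [← neg_sub, neg_inj] at h2
    rw [← h2]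
  · -- g1 f1 - id = sM dM
    intro m
    have h2 : τ (0, f1 m) - τ (dM m, 0) = m := by
      rw [← map_sub, Prod.mk_sub_mk, zero_sub, sub_zero]
      exact hτa m
    simp only [comp_apply, inr_apply, inl_apply]
    set A := τ (0, f1 m) with hA
    set B := τ (dM m, 0) with hB
    rw [← h2]; abel
  · -- f0 g0 - id = dN sN
    intro n
    have h2 := hσ' n
    simp only [hb_def, coprod_apply] at h2
    simp only [comp_apply, LinearMap.neg_apply, snd_apply, fst_apply, map_neg]
    set p := σ n with hp
    rw [← h2]; abel
  · -- f1 g1 - id = sN dN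
    intro n
    have h2 := congrArg Prod.snd (haτ (0, n))
    simp only [ha_def, hb_def, prod_apply, Function.prod, coprod_apply, map_zero, zero_add,
      Prod.snd_sub] at h2
    simp only [comp_apply, LinearMap.neg_apply, snd_apply, inr_apply, map_neg]
    rw [h2]; abel

/-- Let `f = (f1, f0) : [M⁻¹ → M⁰] → [N⁻¹ → N⁰]` be a
quasi-isomorphism of two-term complexes of finitely generated free abelian groups.  Then
the dual map `[(N⁰)^∨ → (N⁻¹)^∨] → [(M⁰)^∨ → (M⁻¹)^∨]`, where `X^∨ = Hom_ℤ(X, ℤ)`, is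
also a quasi-isomorphism. -/
theorem stmt16 {M1 M0 N1 N0 : Type*} [AddCommGroup M1] [AddCommGroup M0]
    [AddCommGroup N1] [AddCommGroup N0]
    [Module.Free ℤ M1] [Module.Finite ℤ M1] [Module.Free ℤ M0] [Module.Finite ℤ M0]
    [Module.Free ℤ N1] [Module.Finite ℤ N1] [Module.Free ℤ N0] [Module.Finite ℤ N0]
    (dM : M1 →ₗ[ℤ] M0) (dN : N1 →ₗ[ℤ] N0) (f1 : M1 →ₗ[ℤ] N1) (f0 : M0 →ₗ[ℤ] N0)
    (h : IsTwoTermQuasiIso dM dN f1 f0) :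
    IsTwoTermQuasiIso (LinearMap.dualMap dN) (LinearMap.dualMap dM)
      (LinearMap.dualMap f0) (LinearMap.dualMap f1) := by
  have hc := h.1
  obtain ⟨g1, g0, sM, sN, hg, hgf0, hgf1, hfg0, hfg1⟩ := exists_htpy_inv dM dN f1 f0 h
  refine ⟨?_, ?_, ?_, ?_, ?_⟩
  · -- morphism of complexes
    intro ψ
    ext m
    simp only [dualMap_apply, comp_apply]
    exact (congrArg ψ (hc m)).symm
  · -- injective on kernels
    intro ψ h1 h2
    ext n
    have e1 : ψ (f0 (g0 n)) = 0 := LinearMap.congr_fun h2 (g0 n)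
    have e2 : ψ (dN (sN n)) = 0 := LinearMap.congr_fun h1 (sN n)
    have e3 : f0 (g0 n) - n = dN (sN n) := hfg0 n
    have : ψ (f0 (g0 n) - n) = 0 := by rw [e3]; exact e2
    rw [map_sub, e1, zero_sub, neg_eq_zero] at this
    exact this
  · -- surjective on kernels
    intro φ hφ
    refine ⟨φ ∘ₗ g0, ?_, ?_⟩
    · ext n
      have : φ (dM (g1 n)) = 0 := LinearMap.congr_fun hφ (g1 n)
      simp only [dualMap_apply, comp_apply, LinearMap.zero_apply, hg n, this]
    · ext m
      have e1 : φ (dM (sM m)) = 0 := LinearMap.congr_fun hφ (sM m)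
      have e2 : g0 (f0 m) - m = dM (sM m) := hgf0 m
      have : φ (g0 (f0 m) - m) = 0 := by rw [e2]; exact e1
      rw [map_sub, sub_eq_zero] at this
      simpa [dualMap_apply] using this
  · -- injective on cokernels
    rintro ψ ⟨φ, hφ⟩
    have hψφ : ∀ x, ψ (f1 x) = φ (dM x) := fun x => LinearMap.congr_fun hφ x
    refine ⟨φ ∘ₗ g0 - ψ ∘ₗ sN, ?_⟩
    ext n
    simp only [dualMap_apply, LinearMap.sub_apply, comp_apply, hg n, ← hψφ (g1 n)]
    have e1 : f1 (g1 n) - n = sN (dN n) := hfg1 n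
    have : ψ (f1 (g1 n) - n) = ψ (sN (dN n)) := congrArg ψ e1
    rw [map_sub] at this
    rw [← this]
    abel
  · -- surjective on cokernels
    intro ψ0
    refine ⟨ψ0 ∘ₗ g1, -(ψ0 ∘ₗ sM), ?_⟩
    ext m
    simp only [LinearMap.add_apply, dualMap_apply, comp_apply, LinearMap.neg_apply]
    have e1 : g1 (f1 m) - m = sM (dM m) := hgf1 m
    have : ψ0 (g1 (f1 m) - m) = ψ0 (sM (dM m)) := congrArg ψ0 e1
    rw [map_sub] at this
    set A := ψ0 (g1 (f1 m)) with hA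
    set B := ψ0 (sM (dM m)) with hB
    rw [sub_eq_iff_eq_add] at this
    rw [this]
    abel
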